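/- Consider the copositive program min_{W ∈ Δ^p} Tr(C W) subject to 𝒜W = v. Let β₀ > 0, and for t = 1, 2, … set β_t = β₀√(t+1) and η_t = 2/(t+1). Let W₁ ∈ Δ^p and y₁ ∈ ℝ^d, and for each t ≥ 1 define: G_t = C + 𝒜ᵀy_t + β_t 𝒜ᵀ(𝒜W_t − v); H_t ∈ Δ^p any minimizer of W ↦ Tr(G_t W) over Δ^p; W_{t+1} = (1 − η_t) W_t + η_t H_t; g_t = 𝒜W_{t+1} − v; and y_{t+1} = y_t + γ_t g_t where γ_t ≥ 0 satisfies γ_t‖g_t‖² ≤ β_t η_t² p² ‖𝒜‖². Assume there exists W⋆ ∈ Δ^p with 𝒜W⋆ = v minimizing Tr(C W) over {W ∈ Δ^p : 𝒜W = v}, that strong duality holds in the sense that there exists y⋆ ∈ ℝ^d with Tr(C W⋆) ≤ Tr(C W) + y⋆ᵀ(𝒜W − v) for all W ∈ Δ^p, and that there is D < ∞ with ‖y_t‖ ≤ D for all t and ‖y⋆‖ ≤ D. Then for every t ≥ 2, Tr(C W_t) − Tr(C W⋆) ≤ (1/√t)(6 β₀ p² ‖𝒜‖² + D²/(2β₀)).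 -/

import Mathlib

open scoped BigOperators

noncomputable section

/-- A binary (0/1-valued) vector. -/
def binaryVec {ι : Type*} (x : ι → ℝ) : Prop := ∀ i, x i = 0 ∨ x i = 1

/-- `Δ^p`: the convex hull of the rank-one binary matrices `x xᵀ`, `x ∈ {0,1}^p`. -/
def CPdelta (ι : Type*) [Fintype ι] : Set (Matrix ι ι ℝ) :=
  convexHull ℝ {M | ∃ x : ι → ℝ, binaryVec x ∧ M = Matrix.vecMulVec x x}

/-- Frobenius inner product of matrices. -/
def frobInner {ι : Type*} [Fintype ι] (A B : Matrix ι ι ℝ) : ℝ := ∑ i, ∑ j, A i j * B i j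

/-- Frobenius norm of a matrix. -/
def frobNorm {ι : Type*} [Fintype ι] (A : Matrix ι ι ℝ) : ℝ :=
  Real.sqrt (∑ i, ∑ j, (A i j) ^ 2)

/-- Operator norm `‖𝒜‖ = sup {‖𝒜X‖ : ‖X‖_F ≤ 1}` of a linear map from matrices
(with the Frobenius norm) to `ℝ^d` (with the Euclidean norm). -/
def opNorm {p d : ℕ} (A : Matrix (Fin p) (Fin p) ℝ →ₗ[ℝ] EuclideanSpace ℝ (Fin d)) : ℝ :=
  sSup {r : ℝ | ∃ X : Matrix (Fin p) (Fin p) ℝ, frobNorm X ≤ 1 ∧ r = ‖A X‖}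

open scoped RealInnerProductSpace
open Matrix

/- ### Auxiliary lemmas -/

lemma cpdelta_subset {ι : Type*} [Fintype ι] :
    CPdelta ι ⊆ {M : Matrix ι ι ℝ | M.IsSymm ∧ ∀ i j, M i j ∈ Set.Icc (0:ℝ) 1} := by
  apply convexHull_min
  · rintro M ⟨x, hx, rfl⟩
    constructor
    · ext i j
      simp [Matrix.vecMulVec_apply, Matrix.transpose_apply, mul_comm]
    · intro i j
      rcases hx i with h | h <;> rcases hx j with h' | h' <;>
        simp [Matrix.vecMulVec_apply, h, h']
  · intro M hM N hN a b ha hb hab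
    constructor
    · have h : (a • M + b • N)ᵀ = a • M + b • N := by
        rw [Matrix.transpose_add, Matrix.transpose_smul, Matrix.transpose_smul,
          hM.1, hN.1]
      exact h
    · intro i j
      have h1 := hM.2 i j
      have h2 := hN.2 i j
      simp only [Matrix.add_apply, Matrix.smul_apply, smul_eq_mul, Set.mem_Icc] at *
      constructor
      · nlinarith [h1.1, h2.1]
      · nlinarith [h1.2, h2.2, h1.1, h2.1]

lemma frobNorm_nonneg {ι : Type*} [Fintype ι] (A : Matrix ι ι ℝ) : 0 ≤ frobNorm A :=
  Real.sqrt_nonneg _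

lemma frobNorm_diff_le {p : ℕ} {X Y : Matrix (Fin p) (Fin p) ℝ}
    (hX : ∀ i j, X i j ∈ Set.Icc (0:ℝ) 1) (hY : ∀ i j, Y i j ∈ Set.Icc (0:ℝ) 1) :
    frobNorm (X - Y) ≤ (p : ℝ) := by
  have h : (∑ i, ∑ j, ((X - Y) i j) ^ 2) ≤ (p : ℝ) ^ 2 := by
    calc (∑ i : Fin p, ∑ j : Fin p, ((X - Y) i j) ^ 2)
        ≤ ∑ i : Fin p, ∑ j : Fin p, (1:ℝ) := by
          apply Finset.sum_le_sum; intro i _; apply Finset.sum_le_sum; intro j _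
          have h1 := hX i j; have h2 := hY i j
          simp only [Set.mem_Icc] at h1 h2
          simp only [Matrix.sub_apply]
          nlinarith [h1.1, h1.2, h2.1, h2.2]
      _ = (p : ℝ) ^ 2 := by simp [sq]
  have h' := Real.sqrt_le_sqrt h
  rwa [Real.sqrt_sq (by positivity)] at h'

lemma frobNorm_eq_zero {ι : Type*} [Fintype ι] {A : Matrix ι ι ℝ} (h : frobNorm A = 0) :
    A = 0 := by
  have hs : (∑ i, ∑ j, (A i j) ^ 2) = 0 := by
    have hnn : (0:ℝ) ≤ ∑ i, ∑ j, (A i j) ^ 2 := by positivity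
    exact Real.sqrt_eq_zero hnn |>.mp h
  ext i j
  have h1 : ∀ i ∈ Finset.univ, (0:ℝ) ≤ ∑ j, (A i j)^2 := by intros; positivity
  have h2 := (Finset.sum_eq_zero_iff_of_nonneg h1).mp hs i (Finset.mem_univ i)
  have h3 : ∀ j ∈ Finset.univ, (0:ℝ) ≤ (A i j)^2 := by intros; positivity
  have h4 := (Finset.sum_eq_zero_iff_of_nonneg h3).mp h2 j (Finset.mem_univ j)
  simpa using pow_eq_zero_iff (n := 2) (by norm_num) |>.mp h4

lemma frobNorm_smul {ι : Type*} [Fintype ι] (c : ℝ) (A : Matrix ι ι ℝ) :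
    frobNorm (c • A) = |c| * frobNorm A := by
  unfold frobNorm
  rw [← Real.sqrt_sq_eq_abs, ← Real.sqrt_mul (by positivity)]
  congr 1
  rw [Finset.mul_sum]
  apply Finset.sum_congr rfl; intro i _
  rw [Finset.mul_sum]
  apply Finset.sum_congr rfl; intro j _
  simp [Matrix.smul_apply, smul_eq_mul]; ring

lemma opNorm_bddAbove {p d : ℕ}
    (A : Matrix (Fin p) (Fin p) ℝ →ₗ[ℝ] EuclideanSpace ℝ (Fin d)) :
    BddAbove {r : ℝ | ∃ X : Matrix (Fin p) (Fin p) ℝ, frobNorm X ≤ 1 ∧ r = ‖A X‖} := by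
  refine ⟨∑ i : Fin p, ∑ j : Fin p, ‖A (Matrix.single i j (1:ℝ))‖, ?_⟩
  rintro r ⟨X, hX, rfl⟩
  have hent : ∀ i j, |X i j| ≤ 1 := by
    intro i j
    have hsum : (∑ i, ∑ j, (X i j) ^ 2) ≤ 1 := by
      have h0 : (0:ℝ) ≤ ∑ i, ∑ j, (X i j) ^ 2 := by positivity
      unfold frobNorm at hX
      nlinarith [Real.sq_sqrt h0, hX, Real.sqrt_nonneg (∑ i, ∑ j, (X i j) ^ 2)]
    have h1 : (X i j)^2 ≤ 1 := by
      calc (X i j)^2 ≤ ∑ j', (X i j')^2 :=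
            Finset.single_le_sum (f := fun j' => (X i j')^2) (by intros; positivity)
              (Finset.mem_univ j)
        _ ≤ ∑ i', ∑ j', (X i' j')^2 :=
            Finset.single_le_sum (f := fun i' => ∑ j', (X i' j')^2) (by intros; positivity)
              (Finset.mem_univ i)
        _ ≤ 1 := hsum
    rw [abs_le]; constructor <;> nlinarith
  calc ‖A X‖ = ‖A (∑ i, ∑ j, Matrix.single i j (X i j))‖ := by
        rw [← Matrix.matrix_eq_sum_single X]
    _ = ‖∑ i, ∑ j, A (Matrix.single i j (X i j))‖ := by
        rw [map_sum]; congr 1; apply Finset.sum_congr rfl; intros; rw [map_sum]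
    _ ≤ ∑ i, ‖∑ j, A (Matrix.single i j (X i j))‖ := norm_sum_le _ _
    _ ≤ ∑ i, ∑ j, ‖A (Matrix.single i j (X i j))‖ := by
        apply Finset.sum_le_sum; intros; exact norm_sum_le _ _
    _ ≤ ∑ i, ∑ j, ‖A (Matrix.single i j (1:ℝ))‖ := by
        apply Finset.sum_le_sum; intro i _; apply Finset.sum_le_sum; intro j _
        have h : Matrix.single i j (X i j) = X i j • Matrix.single i j (1:ℝ) := by
          rw [Matrix.smul_single]; simp
        rw [h, _root_.map_smul, norm_smul]
        have h' : ‖X i j‖ ≤ 1 := by rw [Real.norm_eq_abs]; exact hent i j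
        nlinarith [norm_nonneg (A (Matrix.single i j (1:ℝ)))]

lemma opNorm_nonneg {p d : ℕ}
    (A : Matrix (Fin p) (Fin p) ℝ →ₗ[ℝ] EuclideanSpace ℝ (Fin d)) : 0 ≤ opNorm A := by
  have h0 : (0:ℝ) ∈ {r : ℝ | ∃ X : Matrix (Fin p) (Fin p) ℝ, frobNorm X ≤ 1 ∧ r = ‖A X‖} :=
    ⟨0, by simp [frobNorm], by simp⟩
  exact le_csSup (opNorm_bddAbove A) h0

lemma norm_apply_le_opNorm {p d : ℕ}
    (A : Matrix (Fin p) (Fin p) ℝ →ₗ[ℝ] EuclideanSpace ℝ (Fin d))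
    (X : Matrix (Fin p) (Fin p) ℝ) : ‖A X‖ ≤ opNorm A * frobNorm X := by
  rcases eq_or_lt_of_le (frobNorm_nonneg X) with h | h
  · have hX0 : X = 0 := frobNorm_eq_zero h.symm
    simp [hX0, ← h]
    simp [frobNorm]
  · set r := frobNorm X with hr
    have hmem : ‖A (r⁻¹ • X)‖ ∈
        {s : ℝ | ∃ Y : Matrix (Fin p) (Fin p) ℝ, frobNorm Y ≤ 1 ∧ s = ‖A Y‖} := by
      refine ⟨r⁻¹ • X, ?_, rfl⟩
      rw [frobNorm_smul, abs_of_pos (by positivity), ← hr, inv_mul_cancel₀ (ne_of_gt h)]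
    have hle := le_csSup (opNorm_bddAbove A) hmem
    rw [_root_.map_smul, norm_smul, Real.norm_eq_abs, abs_of_pos (by positivity)] at hle
    calc ‖A X‖ = r * (r⁻¹ * ‖A X‖) := by field_simp
      _ ≤ r * opNorm A := by
          apply mul_le_mul_of_nonneg_left hle (le_of_lt h)
      _ = opNorm A * r := mul_comm _ _

lemma inner_eq_sum {d : ℕ} (z w : EuclideanSpace ℝ (Fin d)) : ⟪z, w⟫ = ∑ i, z i * w i := by
  rw [PiLp.inner_apply]
  simp [RCLike.inner_apply, mul_comm]

lemma trace_mul_symm {ι : Type*} [Fintype ι] (M X : Matrix ι ι ℝ) (hX : X.IsSymm) :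
    Matrix.trace (M * X) = frobInner M X := by
  rw [Matrix.trace]
  unfold frobInner
  simp only [Matrix.diag_apply, Matrix.mul_apply]
  apply Finset.sum_congr rfl; intro i _
  apply Finset.sum_congr rfl; intro j _
  rw [hX.apply]

lemma key1 (t : ℕ) (ht : 1 ≤ t) :
    Real.sqrt ((t:ℝ)+1) * ((t:ℝ)-3) ≤ Real.sqrt (t:ℝ) * ((t:ℝ)-1) := by
  have ht1 : (1:ℝ) ≤ (t:ℝ) := by exact_mod_cast ht
  set a := Real.sqrt (t:ℝ) with ha
  set b := Real.sqrt ((t:ℝ)+1) with hb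
  have ha2 : a^2 = (t:ℝ) := Real.sq_sqrt (by linarith)
  have hb2 : b^2 = (t:ℝ)+1 := Real.sq_sqrt (by linarith)
  have ha0 : 1 ≤ a := by nlinarith [Real.sqrt_nonneg (t:ℝ)]
  have hb0 : 0 ≤ b := Real.sqrt_nonneg _
  rcases le_or_gt (t:ℝ) 3 with h | h
  · have h1 : b * ((t:ℝ)-3) ≤ 0 := mul_nonpos_of_nonneg_of_nonpos hb0 (by linarith)
    have h2 : 0 ≤ a * ((t:ℝ)-1) := mul_nonneg (by linarith) (by linarith)
    linarith
  · have hsq : (b * ((t:ℝ)-3))^2 ≤ (a * ((t:ℝ)-1))^2 := by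
      rw [mul_pow, mul_pow, ha2, hb2]
      nlinarith
    have hL : 0 ≤ b * ((t:ℝ)-3) := mul_nonneg hb0 (by linarith)
    have hR : 0 ≤ a * ((t:ℝ)-1) := mul_nonneg (by linarith) (by linarith)
    nlinarith

lemma key2 (t : ℕ) (ht : 1 ≤ t) :
    ((t:ℝ)-1) * Real.sqrt ((t:ℝ)+1) ≤ (t:ℝ) * Real.sqrt (t:ℝ) := by
  have ht1 : (1:ℝ) ≤ (t:ℝ) := by exact_mod_cast ht
  set a := Real.sqrt (t:ℝ) with ha
  set b := Real.sqrt ((t:ℝ)+1) with hb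
  have ha2 : a^2 = (t:ℝ) := Real.sq_sqrt (by linarith)
  have hb2 : b^2 = (t:ℝ)+1 := Real.sq_sqrt (by linarith)
  have ha0 : 1 ≤ a := by nlinarith [Real.sqrt_nonneg (t:ℝ)]
  have hb0 : 0 ≤ b := Real.sqrt_nonneg _
  have hsq : (((t:ℝ)-1)*b)^2 ≤ ((t:ℝ)*a)^2 := by
    rw [mul_pow, mul_pow, ha2, hb2]; nlinarith
  have hL : 0 ≤ ((t:ℝ)-1)*b := mul_nonneg (by linarith) hb0
  have hR : 0 ≤ (t:ℝ)*a := mul_nonneg (by linarith) (by linarith)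
  nlinarith

lemma scalar_step (t : ℕ) (ht : 2 ≤ t) (B : ℝ) (hB : 0 ≤ B) :
    (1 - 2/((t:ℝ)+1)) * (6*B / Real.sqrt (t:ℝ))
      + (3/2) * Real.sqrt ((t:ℝ)+1) * (2/((t:ℝ)+1))^2 * B
    ≤ 6*B / Real.sqrt ((t:ℝ)+1) := by
  have ht1 : (2:ℝ) ≤ (t:ℝ) := by exact_mod_cast ht
  have hk := key2 t (by omega)
  set a := Real.sqrt (t:ℝ) with ha
  set b := Real.sqrt ((t:ℝ)+1) with hb
  have ha2 : a^2 = (t:ℝ) := Real.sq_sqrt (by linarith)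
  have hb2 : b^2 = (t:ℝ)+1 := Real.sq_sqrt (by linarith)
  have ha0 : 1 ≤ a := by nlinarith [Real.sqrt_nonneg (t:ℝ)]
  have hb0 : 1 ≤ b := by nlinarith [Real.sqrt_nonneg ((t:ℝ)+1)]
  have hc : (0:ℝ) < (t:ℝ)+1 := by linarith
  have hkB := mul_le_mul_of_nonneg_left hk hB
  have hkBc := mul_le_mul_of_nonneg_left hkB (le_of_lt hc)
  have hane : a ≠ 0 := by linarith
  have hbne : b ≠ 0 := by linarith
  have hcne : ((t:ℝ)+1) ≠ 0 := by linarith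
  have hpos : (0:ℝ) < a*b*((t:ℝ)+1)^2 := by positivity
  rw [← mul_le_mul_iff_of_pos_right hpos]
  have eL : ((1 - 2/((t:ℝ)+1)) * (6*B / a) + (3/2) * b * (2/((t:ℝ)+1))^2 * B) * (a*b*((t:ℝ)+1)^2)
      = 6*B*b*((t:ℝ)+1)^2 - 12*B*b*((t:ℝ)+1) + 6*B*a*b^2 := by
    field_simp
    ring
  have eR : (6*B/b) * (a*b*((t:ℝ)+1)^2) = 6*B*a*((t:ℝ)+1)^2 := by
    field_simp
  rw [eL, eR, hb2]
  nlinarith [hkBc]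

/-- The augmented-Lagrangian potential used in the convergence proof. -/
def Epot {p d : ℕ} (C : Matrix (Fin p) (Fin p) ℝ)
    (A : Matrix (Fin p) (Fin p) ℝ →ₗ[ℝ] EuclideanSpace ℝ (Fin d))
    (v : EuclideanSpace ℝ (Fin d)) (β₀ : ℝ)
    (W : ℕ → Matrix (Fin p) (Fin p) ℝ) (y : ℕ → EuclideanSpace ℝ (Fin d))
    (fstar : ℝ) (t : ℕ) : ℝ :=
  Matrix.trace (C * W t) - fstar + ⟪y t, A (W t) - v⟫ +
    (β₀ * Real.sqrt (t : ℝ) / 2) * ‖A (W t) - v‖^2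

set_option maxHeartbeats 2000000 in
theorem fwal_objective_suboptimality
    {p d : ℕ} (hp : 0 < p)
    (C : Matrix (Fin p) (Fin p) ℝ) (hC : C.IsSymm)
    (A : Matrix (Fin p) (Fin p) ℝ →ₗ[ℝ] EuclideanSpace ℝ (Fin d))
    (Aadj : EuclideanSpace ℝ (Fin d) →ₗ[ℝ] Matrix (Fin p) (Fin p) ℝ)
    (hadj : ∀ (X : Matrix (Fin p) (Fin p) ℝ) (z : EuclideanSpace ℝ (Fin d)),
      (∑ i, A X i * z i) = frobInner (Aadj z) X)
    (v : EuclideanSpace ℝ (Fin d))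
    (β₀ : ℝ) (hβ₀ : 0 < β₀)
    (W : ℕ → Matrix (Fin p) (Fin p) ℝ)
    (y : ℕ → EuclideanSpace ℝ (Fin d))
    (H : ℕ → Matrix (Fin p) (Fin p) ℝ)
    (γ : ℕ → ℝ)
    (hW1 : W 1 ∈ CPdelta (Fin p))
    -- `H t` is a minimizer over `Δ^p` of `Z ↦ Tr (G_t Z)`, where
    -- `G_t = C + 𝒜ᵀ y_t + β_t 𝒜ᵀ (𝒜 W_t - v)` and `β_t = β₀ √(t+1)`
    (hHmem : ∀ t, 1 ≤ t → H t ∈ CPdelta (Fin p))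
    (hHmin : ∀ t, 1 ≤ t → ∀ Z ∈ CPdelta (Fin p),
      Matrix.trace
        ((C + Aadj (y t) + (β₀ * Real.sqrt ((t : ℝ) + 1)) • Aadj (A (W t) - v)) * H t) ≤
      Matrix.trace
        ((C + Aadj (y t) + (β₀ * Real.sqrt ((t : ℝ) + 1)) • Aadj (A (W t) - v)) * Z))
    -- primal update with step-size `η_t = 2/(t+1)`
    (hWupd : ∀ t, 1 ≤ t →
      W (t + 1) = (1 - 2 / ((t : ℝ) + 1)) • W t + (2 / ((t : ℝ) + 1)) • H t)
    -- dual step-size condition `γ_t ≥ 0`, `γ_t ‖g_t‖² ≤ β_t η_t² p² ‖𝒜‖²`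
    (hγ0 : ∀ t, 1 ≤ t → 0 ≤ γ t)
    (hγ : ∀ t, 1 ≤ t →
      γ t * ‖A (W (t + 1)) - v‖ ^ 2 ≤
        (β₀ * Real.sqrt ((t : ℝ) + 1)) * (2 / ((t : ℝ) + 1)) ^ 2 * (p : ℝ) ^ 2 * opNorm A ^ 2)
    -- dual update `y_{t+1} = y_t + γ_t g_t` with `g_t = 𝒜 W_{t+1} - v`
    (hyupd : ∀ t, 1 ≤ t → y (t + 1) = y t + γ t • (A (W (t + 1)) - v))
    (Wstar : Matrix (Fin p) (Fin p) ℝ)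
    (hWstar : Wstar ∈ CPdelta (Fin p)) (hfeas : A Wstar = v)
    -- `W⋆` minimizes `Tr(C W)` over the feasible set
    (hmin : ∀ Z ∈ CPdelta (Fin p), A Z = v →
      Matrix.trace (C * Wstar) ≤ Matrix.trace (C * Z))
    -- strong duality: a dual optimal `y⋆`
    (ystar : EuclideanSpace ℝ (Fin d))
    (hdual : ∀ Z ∈ CPdelta (Fin p),
      Matrix.trace (C * Wstar) ≤ Matrix.trace (C * Z) + ∑ i, ystar i * (A Z - v) i)
    -- bounded effective dual domain
    (D : ℝ) (hyD : ∀ t, 1 ≤ t → ‖y t‖ ≤ D) (hystarD : ‖ystar‖ ≤ D) :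
    ∀ t, 2 ≤ t →
      Matrix.trace (C * W t) - Matrix.trace (C * Wstar) ≤
        (1 / Real.sqrt (t : ℝ)) *
          (6 * β₀ * (p : ℝ) ^ 2 * opNorm A ^ 2 + D ^ 2 / (2 * β₀)) := by
  have hbox : ∀ X ∈ CPdelta (Fin p), (X.IsSymm ∧ ∀ i j, X i j ∈ Set.Icc (0:ℝ) 1) :=
    fun X hX => cpdelta_subset hX
  have hinner : ∀ (z : EuclideanSpace ℝ (Fin d)) (X : Matrix (Fin p) (Fin p) ℝ),
      ⟪z, A X⟫ = frobInner (Aadj z) X := by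
    intro z X
    rw [inner_eq_sum, ← hadj X z]
    exact Finset.sum_congr rfl fun i _ => mul_comm _ _
  have htrAdj : ∀ (z : EuclideanSpace ℝ (Fin d)) (X : Matrix (Fin p) (Fin p) ℝ), X.IsSymm →
      Matrix.trace (Aadj z * X) = ⟪z, A X⟫ := by
    intro z X hX; rw [trace_mul_symm _ _ hX, hinner]
  -- W t ∈ Δ for t ≥ 1
  have hWmem : ∀ t, 1 ≤ t → W t ∈ CPdelta (Fin p) := by
    intro t ht
    induction t, ht using Nat.le_induction with
    | base => exact hW1
    | succ t ht ih =>
      rw [hWupd t ht]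
      have hη0 : (0:ℝ) ≤ 2/((t:ℝ)+1) := by positivity
      have hη1 : 2/((t:ℝ)+1) ≤ 1 := by
        rw [div_le_one (by positivity)]
        have h1 : (1:ℝ) ≤ (t:ℝ) := by exact_mod_cast ht
        linarith
      exact (convex_convexHull ℝ _) ih (hHmem t ht) (by linarith) hη0 (by ring)
  have hBnn : 0 ≤ β₀*(p:ℝ)^2*opNorm A^2 :=
    mul_nonneg (mul_nonneg hβ₀.le (sq_nonneg _)) (sq_nonneg _)
  -- main one-step inequality
  have hstep : ∀ t, 1 ≤ t →
      Epot C A v β₀ W y (Matrix.trace (C * Wstar)) (t+1) ≤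
        (1 - 2/((t:ℝ)+1)) * Epot C A v β₀ W y (Matrix.trace (C * Wstar)) t
          + (3/2) * Real.sqrt ((t:ℝ)+1) * (2/((t:ℝ)+1))^2 * (β₀*(p:ℝ)^2*opNorm A^2) := by
    intro t ht
    have ht1 : (1:ℝ) ≤ (t:ℝ) := by exact_mod_cast ht
    have hc : (0:ℝ) < (t:ℝ)+1 := by linarith
    have hη0 : (0:ℝ) ≤ 2/((t:ℝ)+1) := by positivity
    obtain ⟨hWsym, hWbox⟩ := hbox _ (hWmem t ht)
    obtain ⟨hHsym, hHbox⟩ := hbox _ (hHmem t ht)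
    obtain ⟨hWssym, hWsbox⟩ := hbox _ hWstar
    have hΔsym : (H t - W t).IsSymm := by
      unfold Matrix.IsSymm at *
      rw [Matrix.transpose_sub, hHsym, hWsym]
    have hWsWtsym : (Wstar - W t).IsSymm := by
      unfold Matrix.IsSymm at *
      rw [Matrix.transpose_sub, hWssym, hWsym]
    -- update identities
    have h_upd : W (t+1) = W t + (2/((t:ℝ)+1)) • (H t - W t) := by
      rw [hWupd t ht]; module
    have h_g' : A (W (t+1)) - v = (A (W t) - v) + (2/((t:ℝ)+1)) • A (H t - W t) := by
      rw [h_upd, map_add, _root_.map_smul, map_sub]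
      abel
    have h_tr : Matrix.trace (C * W (t+1)) =
        Matrix.trace (C * W t) + (2/((t:ℝ)+1)) * Matrix.trace (C * (H t - W t)) := by
      rw [h_upd, Matrix.mul_add, Matrix.trace_add, Matrix.mul_smul, Matrix.trace_smul,
        smul_eq_mul]
    have h_y : ⟪y (t+1), A (W (t+1)) - v⟫ =
        ⟪y t, A (W (t+1)) - v⟫ + γ t * ‖A (W (t+1)) - v‖^2 := by
      rw [hyupd t ht, inner_add_left, real_inner_smul_left, real_inner_self_eq_norm_sq]
    have h_y2 : ⟪y t, A (W (t+1)) - v⟫ =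
        ⟪y t, A (W t) - v⟫ + (2/((t:ℝ)+1)) * ⟪y t, A (H t - W t)⟫ := by
      rw [h_g', inner_add_right, real_inner_smul_right]
    have h_n : ‖A (W (t+1)) - v‖^2 = ‖A (W t) - v‖^2
        + 2*(2/((t:ℝ)+1))*⟪A (W t) - v, A (H t - W t)⟫
        + (2/((t:ℝ)+1))^2 * ‖A (H t - W t)‖^2 := by
      rw [h_g', norm_add_sq_real, real_inner_smul_right, norm_smul, Real.norm_eq_abs,
        abs_of_nonneg hη0, mul_pow]
      ring
    -- expansion of the linearized objective
    have hGexp : ∀ X : Matrix (Fin p) (Fin p) ℝ, X.IsSymm →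
        Matrix.trace ((C + Aadj (y t) + (β₀ * Real.sqrt ((t:ℝ)+1)) • Aadj (A (W t) - v)) * X)
          = Matrix.trace (C * X) + ⟪y t, A X⟫
            + (β₀ * Real.sqrt ((t:ℝ)+1)) * ⟪A (W t) - v, A X⟫ := by
      intro X hX
      rw [Matrix.add_mul, Matrix.add_mul, Matrix.trace_add, Matrix.trace_add,
        Matrix.smul_mul, Matrix.trace_smul, htrAdj _ _ hX, htrAdj _ _ hX, smul_eq_mul]
    have hGH := hHmin t ht Wstar hWstar
    have hsub1 : Matrix.trace
          ((C + Aadj (y t) + (β₀ * Real.sqrt ((t:ℝ)+1)) • Aadj (A (W t) - v)) * (H t - W t))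
        = Matrix.trace
            ((C + Aadj (y t) + (β₀ * Real.sqrt ((t:ℝ)+1)) • Aadj (A (W t) - v)) * H t)
          - Matrix.trace
            ((C + Aadj (y t) + (β₀ * Real.sqrt ((t:ℝ)+1)) • Aadj (A (W t) - v)) * W t) := by
      rw [Matrix.mul_sub, Matrix.trace_sub]
    have hsub2 : Matrix.trace
          ((C + Aadj (y t) + (β₀ * Real.sqrt ((t:ℝ)+1)) • Aadj (A (W t) - v)) * (Wstar - W t))
        = Matrix.trace
            ((C + Aadj (y t) + (β₀ * Real.sqrt ((t:ℝ)+1)) • Aadj (A (W t) - v)) * Wstar)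
          - Matrix.trace
            ((C + Aadj (y t) + (β₀ * Real.sqrt ((t:ℝ)+1)) • Aadj (A (W t) - v)) * W t) := by
      rw [Matrix.mul_sub, Matrix.trace_sub]
    have hAws : A (Wstar - W t) = -(A (W t) - v) := by
      rw [map_sub, hfeas]; abel
    have e1 := hGexp (H t - W t) hΔsym
    have e2 := hGexp (Wstar - W t) hWsWtsym
    rw [hAws, inner_neg_right, inner_neg_right, real_inner_self_eq_norm_sq] at e2
    have e3 : Matrix.trace (C * (Wstar - W t)) =
        Matrix.trace (C * Wstar) - Matrix.trace (C * W t) := by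
      rw [Matrix.mul_sub, Matrix.trace_sub]
    have h_lin : Matrix.trace (C * (H t - W t)) + ⟪y t, A (H t - W t)⟫
        + (β₀ * Real.sqrt ((t:ℝ)+1)) * ⟪A (W t) - v, A (H t - W t)⟫
        ≤ Matrix.trace (C * Wstar) - Matrix.trace (C * W t) - ⟪y t, A (W t) - v⟫
          - (β₀ * Real.sqrt ((t:ℝ)+1)) * ‖A (W t) - v‖^2 := by
      linarith [e1, e2, e3, hsub1, hsub2, hGH]
    have h_lin' := mul_le_mul_of_nonneg_left h_lin hη0
    have h_gam := hγ t ht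
    -- bound on ‖A (H t - W t)‖²
    have hAD : ‖A (H t - W t)‖ ≤ opNorm A * (p:ℝ) :=
      calc ‖A (H t - W t)‖ ≤ opNorm A * frobNorm (H t - W t) := norm_apply_le_opNorm A _
        _ ≤ opNorm A * (p:ℝ) :=
            mul_le_mul_of_nonneg_left (frobNorm_diff_le hHbox hWbox) (opNorm_nonneg A)
    have hAD2 : ‖A (H t - W t)‖^2 ≤ (p:ℝ)^2 * opNorm A^2 := by
      calc ‖A (H t - W t)‖^2 ≤ (opNorm A * (p:ℝ))^2 := pow_le_pow_left₀ (norm_nonneg _) hAD 2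
        _ = (p:ℝ)^2 * opNorm A^2 := by ring
    have hADcoef : (0:ℝ) ≤ β₀ * Real.sqrt ((t:ℝ)+1) * (2/((t:ℝ)+1))^2 / 2 := by
      apply div_nonneg _ (by norm_num)
      exact mul_nonneg (mul_nonneg hβ₀.le (Real.sqrt_nonneg _)) (by positivity)
    have h_AD' := mul_le_mul_of_nonneg_left hAD2 hADcoef
    -- coefficient comparison for the ‖g_t‖² term
    have hcoef0 : β₀ * Real.sqrt ((t:ℝ)+1) * (1 - 2*(2/((t:ℝ)+1)))
        ≤ β₀ * Real.sqrt (t:ℝ) * (1 - 2/((t:ℝ)+1)) := by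
      have hk := key1 t ht
      have h1 : (1 - 2*(2/((t:ℝ)+1))) = ((t:ℝ)-3)/((t:ℝ)+1) := by field_simp; ring
      have h2 : (1 - 2/((t:ℝ)+1)) = ((t:ℝ)-1)/((t:ℝ)+1) := by field_simp; ring
      rw [h1, h2,
        show β₀ * Real.sqrt ((t:ℝ)+1) * (((t:ℝ)-3)/((t:ℝ)+1))
          = β₀ * (Real.sqrt ((t:ℝ)+1) * ((t:ℝ)-3)) / ((t:ℝ)+1) from by ring,
        show β₀ * Real.sqrt (t:ℝ) * (((t:ℝ)-1)/((t:ℝ)+1))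
          = β₀ * (Real.sqrt (t:ℝ) * ((t:ℝ)-1)) / ((t:ℝ)+1) from by ring]
      exact (div_le_div_iff_of_pos_right hc).mpr (mul_le_mul_of_nonneg_left hk hβ₀.le)
    have h_coef := mul_le_mul_of_nonneg_right hcoef0 (sq_nonneg ‖A (W t) - v‖)
    -- assemble
    have h_n' := congrArg (fun z => (β₀ * Real.sqrt ((t:ℝ)+1)/2) * z) h_n
    unfold Epot
    push_cast
    linarith only [h_tr, h_y, h_y2, h_n', h_lin', h_gam, h_AD', h_coef]
  -- potential decay by induction
  have hEbound : ∀ t, 2 ≤ t →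
      Epot C A v β₀ W y (Matrix.trace (C * Wstar)) t
        ≤ 6*(β₀*(p:ℝ)^2*opNorm A^2) / Real.sqrt (t:ℝ) := by
    intro t ht
    induction t, ht using Nat.le_induction with
    | base =>
      have h := hstep 1 le_rfl
      norm_num at h ⊢
      have h2 : (0:ℝ) < Real.sqrt 2 := by positivity
      have hs2 : Real.sqrt 2 * Real.sqrt 2 = 2 := Real.mul_self_sqrt (by norm_num)
      have heq : 6*(β₀*(p:ℝ)^2*opNorm A^2) / Real.sqrt 2
          = 3*Real.sqrt 2*(β₀*(p:ℝ)^2*opNorm A^2) := by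
        rw [div_eq_iff (ne_of_gt h2)]; nlinarith [hs2]
      have hfin : (3/2) * Real.sqrt 2 * (β₀*(p:ℝ)^2*opNorm A^2)
          ≤ 3*Real.sqrt 2*(β₀*(p:ℝ)^2*opNorm A^2) := by
        nlinarith [mul_nonneg (Real.sqrt_nonneg 2) hBnn]
      linarith [h, heq, hfin]
    | succ t ht ih =>
      have h := hstep t (by omega)
      have ht2 : (2:ℝ) ≤ (t:ℝ) := by exact_mod_cast ht
      have hη1 : (0:ℝ) ≤ 1 - 2/((t:ℝ)+1) := by
        rw [sub_nonneg, div_le_one (by linarith)]; linarith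
      have h2 := mul_le_mul_of_nonneg_left ih hη1
      have h3 := scalar_step t ht (β₀*(p:ℝ)^2*opNorm A^2) hBnn
      have hcast : ((t+1:ℕ):ℝ) = (t:ℝ)+1 := by push_cast; ring
      rw [hcast]
      linarith [h, h2, h3]
  -- conclusion
  intro t ht
  have ht1 : 1 ≤ t := by omega
  have hE := hEbound t ht
  have htpos : (0:ℝ) < (t:ℝ) := by
    have : 0 < t := by omega
    exact_mod_cast this
  have hsq : 0 < Real.sqrt (t:ℝ) := Real.sqrt_pos.mpr htpos
  have hbs : 0 < β₀ * Real.sqrt (t:ℝ) := mul_pos hβ₀ hsq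
  have hinner_bound : -⟪y t, A (W t) - v⟫ ≤ D * ‖A (W t) - v‖ := by
    have h1 := abs_real_inner_le_norm (y t) (A (W t) - v)
    have h2 : ‖y t‖ * ‖A (W t) - v‖ ≤ D * ‖A (W t) - v‖ :=
      mul_le_mul_of_nonneg_right (hyD t ht1) (norm_nonneg _)
    calc -⟪y t, A (W t) - v⟫ ≤ |⟪y t, A (W t) - v⟫| := neg_le_abs _
      _ ≤ ‖y t‖ * ‖A (W t) - v‖ := h1
      _ ≤ _ := h2
  have hAM : D * ‖A (W t) - v‖ - (β₀ * Real.sqrt (t:ℝ)/2) * ‖A (W t) - v‖^2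
      ≤ D^2/(2*(β₀*Real.sqrt (t:ℝ))) := by
    have hid : D^2/(2*(β₀*Real.sqrt (t:ℝ)))
          + (β₀*Real.sqrt (t:ℝ)/2)*‖A (W t) - v‖^2 - D*‖A (W t) - v‖
        = (D - (β₀*Real.sqrt (t:ℝ))*‖A (W t) - v‖)^2 / (2*(β₀*Real.sqrt (t:ℝ))) := by
      field_simp
      ring
    have hnn : 0 ≤ (D - (β₀*Real.sqrt (t:ℝ))*‖A (W t) - v‖)^2 / (2*(β₀*Real.sqrt (t:ℝ))) :=
      div_nonneg (sq_nonneg _) (by linarith)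
    linarith
  have hRHS : (1/Real.sqrt (t:ℝ)) * (6*β₀*(p:ℝ)^2*opNorm A^2 + D^2/(2*β₀))
      = 6*(β₀*(p:ℝ)^2*opNorm A^2)/Real.sqrt (t:ℝ) + D^2/(2*(β₀*Real.sqrt (t:ℝ))) := by
    field_simp
  rw [hRHS]
  unfold Epot at hE
  linarith [hE, hinner_bound, hAM]
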